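/- Let m ≥ 1, let (R, d) be a metric space, let r_1, …, r_m be real numbers with r_j > 1, and for each N ∈ ℕ^* and each j let (h_j(N, ν))_{0 ≤ ν ≤ N} be a strictly increasing finite sequence of points of [−1,1]. Let φ : (Π_j (−r_j, r_j)) × R → ℂ be continuous, and suppose that for each x ∈ R the function a ↦ φ(a, x) is the restriction to Π_j (−r_j, r_j) of a holomorphic function f_x on the polydisc D^m_{r+2} = { w ∈ ℂ^m : |w_j| < r_j + 2 }, such that for every compact K ⊂ R the family { f_x : x ∈ K } is uniformly bounded on every compact subset of D^m_{r+2}. Then φ(a, x) = lim_{min_j N_j → ∞} Σ_{ν ≺ N} Π_{j=1}^m Π_{ν' = 0, ν' ≠ ν_j}^{N_j} ( (a_j − h_j(N_j, ν')) / (h_j(N_j, ν_j) − h_j(N_j, ν')) ) · φ( h_1(N_1, ν_1), …, h_m(N_m, ν_m), x ), uniformly in (a, x) on every compact subset of (Π_j (−r_j, r_j)) × R. -/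

import Mathlib

open Finset Polynomial Metric Real

namespace Statement5Aux


lemma eval_basis_eq (s : Finset ℕ) (v : ℕ → ℂ) (i : ℕ) (A : ℂ) :
    (Lagrange.basis s v i).eval A = ∏ j ∈ s.erase i, (A - v j) / (v i - v j) := by
  rw [Lagrange.basis, eval_prod]
  refine Finset.prod_congr rfl fun j _ => ?_
  rw [Lagrange.basisDivisor]
  simp [div_eq_inv_mul]

lemma lag_kernel {s : Finset ℕ} {v : ℕ → ℂ} (hv : Set.InjOn v s) {z : ℂ}
    (hz : ∀ μ ∈ s, z ≠ v μ) (A : ℂ) :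
    ∏ μ ∈ s, (A - v μ) =
      ∏ μ ∈ s, (z - v μ) -
        (z - A) * ∑ ν ∈ s, ((Lagrange.basis s v ν).eval A * ∏ μ ∈ s.erase ν, (z - v μ)) := by
  classical
  set W : Polynomial ℂ := ∏ μ ∈ s, (X - C (v μ)) with hWdef
  have hWmonic : W.Monic := monic_prod_of_monic _ _ fun μ _ => monic_X_sub_C _
  set P := W /ₘ (X - C z) with hPdef
  have hdiv : (X - C z) * P = W - C (W.eval z) := by
    have h1 := Polynomial.modByMonic_add_div W (X - C z)
    rw [Polynomial.modByMonic_X_sub_C_eq_C_eval] at h1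
    exact (eq_sub_of_add_eq' h1)
  have hWdeg : W.degree = (s.card : ℕ) := by
    rw [hWdef, degree_prod]
    simp [degree_X_sub_C]
  have hdeg : P.degree < (s.card : ℕ) := by
    have := Polynomial.degree_divByMonic_lt W (X - C z) hWmonic.ne_zero
      (by rw [degree_X_sub_C]; exact zero_lt_one)
    rw [hWdeg] at this; exact this
  have hWeval : ∀ A : ℂ, W.eval A = ∏ μ ∈ s, (A - v μ) := by
    intro A; rw [hWdef, eval_prod]; simp
  have hPnode : ∀ ν ∈ s, P.eval (v ν) = ∏ μ ∈ s.erase ν, (z - v μ) := by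
    intro ν hν
    have h1 : (v ν - z) * P.eval (v ν) = W.eval (v ν) - W.eval z := by
      have := congrArg (Polynomial.eval (v ν)) hdiv
      simpa using this
    have hWν : W.eval (v ν) = 0 := by
      rw [hWeval]; exact Finset.prod_eq_zero hν (sub_self _)
    have hWz : W.eval z = (z - v ν) * ∏ μ ∈ s.erase ν, (z - v μ) := by
      rw [hWeval]; exact (Finset.mul_prod_erase s _ hν).symm
    have hzν : z - v ν ≠ 0 := sub_ne_zero.2 (hz ν hν)
    apply mul_left_cancel₀ (neg_ne_zero.2 hzν)
    rw [hWν, hWz] at h1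
    calc -(z - v ν) * P.eval (v ν) = (v ν - z) * P.eval (v ν) := by ring
      _ = 0 - (z - v ν) * ∏ μ ∈ s.erase ν, (z - v μ) := h1
      _ = -(z - v ν) * ∏ μ ∈ s.erase ν, (z - v μ) := by ring
  have hPA : P.eval A = ∑ ν ∈ s, ((Lagrange.basis s v ν).eval A * ∏ μ ∈ s.erase ν, (z - v μ)) := by
    conv_lhs => rw [Lagrange.eq_interpolate hv hdeg]
    rw [Lagrange.interpolate_apply, eval_finset_sum]
    refine Finset.sum_congr rfl fun ν hν => ?_
    rw [eval_mul, eval_C, hPnode ν hν, mul_comm]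
  have h2 : (A - z) * P.eval A = W.eval A - W.eval z := by
    have := congrArg (Polynomial.eval A) hdiv
    simpa using this
  rw [hPA] at h2
  rw [hWeval, hWeval] at h2
  linear_combination -h2

lemma onedim {so ρ : ℝ} (h1ρ : 1 ≤ ρ) (hρs : ρ + 2 ≤ so)
    (s : Finset ℕ) (v : ℕ → ℝ) (hv : ∀ i ∈ s, |v i| ≤ 1)
    (hinj : Set.InjOn (fun i => ((v i : ℝ) : ℂ)) s)
    {g : ℂ → ℂ} (hg : DiffContOnCl ℂ g (ball (0:ℂ) so))
    {Cg : ℝ} (hCg : ∀ z ∈ sphere (0:ℂ) so, ‖g z‖ ≤ Cg)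
    {a : ℝ} (ha : |a| ≤ ρ) :
    ‖g a - ∑ ν ∈ s, (∏ μ ∈ s.erase ν, (((a - v μ) / (v ν - v μ) : ℝ) : ℂ)) * g (v ν)‖
      ≤ Cg * (so / (so - ρ)) * ((ρ + 1) / (so - 1)) ^ s.card := by
  have hso0 : (0:ℝ) < so := by linarith
  have hsoρ : (0:ℝ) < so - ρ := by linarith
  have hso1 : (0:ℝ) < so - 1 := by linarith
  set vC : ℕ → ℂ := fun i => ((v i : ℝ) : ℂ) with hvC
  set A : ℂ := ((a : ℝ) : ℂ) with hA
  set ℓ : ℕ → ℂ := fun ν => ∏ μ ∈ s.erase ν, (((a - v μ) / (v ν - v μ) : ℝ) : ℂ) with hℓdef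
  have hAnorm : ‖A‖ ≤ ρ := by
    rw [hA, Complex.norm_real, Real.norm_eq_abs]; exact ha
  have hAlt : ‖A‖ < so := lt_of_le_of_lt hAnorm (by linarith)
  have hvnorm : ∀ ν ∈ s, ‖vC ν‖ ≤ 1 := by
    intro ν hν; rw [hvC, Complex.norm_real, Real.norm_eq_abs]; exact hv ν hν
  have hvlt : ∀ ν ∈ s, ‖vC ν‖ < so := fun ν hν => lt_of_le_of_lt (hvnorm ν hν) (by linarith)
  have hgsph : ContinuousOn g (sphere (0:ℂ) so) := by
    refine hg.continuousOn.mono ?_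
    rw [closure_ball (0:ℂ) (ne_of_gt hso0)]
    exact sphere_subset_closedBall
  have hInt : ∀ w : ℂ, ‖w‖ < so → CircleIntegrable (fun z => (z - w)⁻¹ * g z) 0 so := by
    intro w hw
    refine ContinuousOn.circleIntegrable hso0.le (ContinuousOn.mul ?_ hgsph)
    refine ContinuousOn.inv₀ (continuousOn_id.sub continuousOn_const) fun z hz => ?_
    refine sub_ne_zero.2 fun hzw => ?_
    rw [mem_sphere_zero_iff_norm] at hz
    rw [← hzw] at hw; exact absurd hz (ne_of_lt hw)
  have hC : ∀ w : ℂ, ‖w‖ < so →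
      (∮ z in C(0, so), (z - w)⁻¹ * g z) = (2 * (π:ℝ) * Complex.I) * g w := by
    intro w hw
    have := hg.circleIntegral_sub_inv_smul (mem_ball_zero_iff.2 hw)
    simpa [smul_eq_mul] using this
  have hsumInt : CircleIntegrable (fun z => ∑ ν ∈ s, ℓ ν * ((z - vC ν)⁻¹ * g z)) 0 so := by
    refine ContinuousOn.circleIntegrable hso0.le ?_
    apply continuousOn_finset_sum
    intro ν hν
    refine ContinuousOn.mul continuousOn_const (ContinuousOn.mul ?_ hgsph)
    refine ContinuousOn.inv₀ (continuousOn_id.sub continuousOn_const) fun z hz => ?_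
    refine sub_ne_zero.2 fun hzw => ?_
    rw [mem_sphere_zero_iff_norm] at hz
    have := hvlt ν hν; rw [← hzw] at this; exact absurd hz (ne_of_lt this)
  have hsum : (∮ z in C(0,so), ∑ ν ∈ s, ℓ ν * ((z - vC ν)⁻¹ * g z))
      = ∑ ν ∈ s, ℓ ν * ((2 * (π:ℝ) * Complex.I) * g (vC ν)) := by
    have hre : ∀ θ : ℝ, (deriv (circleMap 0 so) θ) •
        (∑ ν ∈ s, ℓ ν * ((circleMap 0 so θ - vC ν)⁻¹ * g (circleMap 0 so θ)))
        = ∑ ν ∈ s, ℓ ν * ((deriv (circleMap 0 so) θ) •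
            ((circleMap 0 so θ - vC ν)⁻¹ * g (circleMap 0 so θ))) := by
      intro θ
      rw [smul_eq_mul, Finset.mul_sum]
      exact Finset.sum_congr rfl fun ν _ => by simp [smul_eq_mul]; ring
    rw [circleIntegral]
    simp only [hre]
    rw [intervalIntegral.integral_finset_sum]
    · refine Finset.sum_congr rfl fun ν hν => ?_
      rw [intervalIntegral.integral_const_mul]
      congr 1
      exact hC (vC ν) (hvlt ν hν)
    · intro ν hν
      exact ((hInt (vC ν) (hvlt ν hν)).out).const_mul (ℓ ν)
  have key : (∮ z in C(0,so), ((z - A)⁻¹ * g z - ∑ ν ∈ s, ℓ ν * ((z - vC ν)⁻¹ * g z)))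
      = (2 * (π:ℝ) * Complex.I) * (g A - ∑ ν ∈ s, ℓ ν * g (vC ν)) := by
    rw [circleIntegral.integral_sub (hInt A hAlt) hsumInt, hC A hAlt, hsum, mul_sub,
      Finset.mul_sum]
    congr 1
    exact Finset.sum_congr rfl fun ν _ => by ring
  -- pointwise kernel identity on the sphere
  have hℓbasis : ∀ ν, ℓ ν = (Lagrange.basis s vC ν).eval A := by
    intro ν
    rw [eval_basis_eq]
    refine Finset.prod_congr rfl fun μ _ => ?_
    push_cast
    rfl
  have hker : ∀ z ∈ sphere (0:ℂ) so,
      (z - A)⁻¹ * g z - ∑ ν ∈ s, ℓ ν * ((z - vC ν)⁻¹ * g z)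
      = ((∏ μ ∈ s, (A - vC μ)) / ((z - A) * ∏ μ ∈ s, (z - vC μ))) * g z := by
    intro z hz
    rw [mem_sphere_zero_iff_norm] at hz
    have hzA : z - A ≠ 0 := by
      refine sub_ne_zero.2 fun hzw => ?_
      rw [hzw] at hz; exact absurd hz (ne_of_lt hAlt)
    have hzv : ∀ μ ∈ s, z - vC μ ≠ 0 := by
      intro μ hμ
      refine sub_ne_zero.2 fun hzw => ?_
      rw [hzw] at hz; exact absurd hz (ne_of_lt (hvlt μ hμ))
    have hzvne : ∀ μ ∈ s, z ≠ vC μ := fun μ hμ => sub_ne_zero.1 (hzv μ hμ)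
    have hprod : (∏ μ ∈ s, (z - vC μ)) ≠ 0 := Finset.prod_ne_zero_iff.2 hzv
    have hmain : (z - A)⁻¹ - ∑ ν ∈ s, ℓ ν * (z - vC ν)⁻¹
        = (∏ μ ∈ s, (A - vC μ)) / ((z - A) * ∏ μ ∈ s, (z - vC μ)) := by
      rw [eq_div_iff (mul_ne_zero hzA hprod), sub_mul, Finset.sum_mul,
        inv_mul_cancel_left₀ hzA]
      have hterm : ∀ ν ∈ s, ℓ ν * (z - vC ν)⁻¹ * ((z - A) * ∏ μ ∈ s, (z - vC μ))
          = (z - A) * ((Lagrange.basis s vC ν).eval A * ∏ μ ∈ s.erase ν, (z - vC μ)) := by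
        intro ν hν
        rw [hℓbasis ν, ← Finset.mul_prod_erase s _ hν]
        field_simp [hzv ν hν]
      rw [Finset.sum_congr rfl hterm, ← Finset.mul_sum]
      exact (lag_kernel hinj hzvne A).symm
    calc (z - A)⁻¹ * g z - ∑ ν ∈ s, ℓ ν * ((z - vC ν)⁻¹ * g z)
        = ((z - A)⁻¹ - ∑ ν ∈ s, ℓ ν * (z - vC ν)⁻¹) * g z := by
          rw [sub_mul, Finset.sum_mul]
          congr 1
          exact Finset.sum_congr rfl fun ν _ => by ring
      _ = _ := by rw [hmain]
  have hkerInt : (∮ z in C(0,so), ((z - A)⁻¹ * g z - ∑ ν ∈ s, ℓ ν * ((z - vC ν)⁻¹ * g z)))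
      = ∮ z in C(0,so), ((∏ μ ∈ s, (A - vC μ)) / ((z - A) * ∏ μ ∈ s, (z - vC μ))) * g z :=
    circleIntegral.integral_congr hso0.le fun z hz => hker z hz
  have hCg0 : 0 ≤ Cg := by
    refine le_trans (norm_nonneg (g ((so:ℝ):ℂ))) (hCg _ ?_)
    simp [mem_sphere_zero_iff_norm, Complex.norm_real, Real.norm_eq_abs,
      _root_.abs_of_pos hso0]
  set B : ℝ := (ρ + 1) ^ s.card / ((so - ρ) * (so - 1) ^ s.card) * Cg with hB
  have hbound : ∀ z ∈ sphere (0:ℂ) so,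
      ‖((∏ μ ∈ s, (A - vC μ)) / ((z - A) * ∏ μ ∈ s, (z - vC μ))) * g z‖ ≤ B := by
    intro z hz
    have hz' : ‖z‖ = so := mem_sphere_zero_iff_norm.1 hz
    rw [norm_mul, norm_div, norm_mul]
    have h1 : ‖∏ μ ∈ s, (A - vC μ)‖ ≤ (ρ + 1) ^ s.card := by
      rw [norm_prod]
      calc ∏ μ ∈ s, ‖A - vC μ‖ ≤ ∏ μ ∈ s, (ρ + 1) := by
            refine Finset.prod_le_prod (fun μ _ => norm_nonneg _) fun μ hμ => ?_
            calc ‖A - vC μ‖ ≤ ‖A‖ + ‖vC μ‖ := norm_sub_le _ _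
              _ ≤ ρ + 1 := add_le_add hAnorm (hvnorm μ hμ)
        _ = (ρ + 1) ^ s.card := by rw [Finset.prod_const]
    have h2 : so - ρ ≤ ‖z - A‖ := by
      calc so - ρ ≤ ‖z‖ - ‖A‖ := by rw [hz']; linarith [hAnorm]
        _ ≤ ‖z - A‖ := norm_sub_norm_le _ _
    have h3 : (so - 1) ^ s.card ≤ ‖∏ μ ∈ s, (z - vC μ)‖ := by
      rw [norm_prod, ← Finset.prod_const]
      refine Finset.prod_le_prod (fun μ _ => hso1.le) fun μ hμ => ?_
      calc so - 1 ≤ ‖z‖ - ‖vC μ‖ := by rw [hz']; linarith [hvnorm μ hμ]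
        _ ≤ ‖z - vC μ‖ := norm_sub_norm_le _ _
    have hden : (0:ℝ) < (so - ρ) * (so - 1) ^ s.card := by positivity
    rw [hB]
    have hq : ‖∏ μ ∈ s, (A - vC μ)‖ / (‖z - A‖ * ‖∏ μ ∈ s, (z - vC μ)‖)
        ≤ (ρ + 1) ^ s.card / ((so - ρ) * (so - 1) ^ s.card) :=
      div_le_div₀ (by positivity) h1 hden
        (mul_le_mul h2 h3 (by positivity) (norm_nonneg _))
    exact mul_le_mul hq (hCg z hz) (norm_nonneg _) (by positivity)
  have hnorm2 : ‖(2 * (π:ℝ) * Complex.I) * (g A - ∑ ν ∈ s, ℓ ν * g (vC ν))‖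
      ≤ 2 * π * so * B := by
    rw [← key, hkerInt]
    exact circleIntegral.norm_integral_le_of_norm_le_const hso0.le hbound
  have hI : ‖(2 * (π:ℝ) * Complex.I : ℂ)‖ = 2 * π := by
    simp [norm_mul, Complex.norm_real, Real.norm_eq_abs,
      _root_.abs_of_nonneg Real.pi_pos.le]
  rw [norm_mul, hI] at hnorm2
  have h2π : (0:ℝ) < 2 * π := by positivity
  have hfin : ‖g A - ∑ ν ∈ s, ℓ ν * g (vC ν)‖ ≤ so * B := by
    have h' : 2 * π * ‖g A - ∑ ν ∈ s, ℓ ν * g (vC ν)‖ ≤ 2 * π * (so * B) := by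
      linarith [hnorm2]
    exact (mul_le_mul_iff_right₀ h2π).1 h'
  calc ‖g A - ∑ ν ∈ s, ℓ ν * g (vC ν)‖ ≤ so * B := hfin
    _ = Cg * (so / (so - ρ)) * ((ρ + 1) / (so - 1)) ^ s.card := by
      rw [hB, div_pow]
      field_simp



noncomputable def interpStep (m : ℕ) (n : Fin m → ℕ) (ℓ : Fin m → ℕ → ℂ)
    (t : Fin m → ℕ → ℂ) (k : Fin m) (F : (Fin m → ℂ) → ℂ) : (Fin m → ℂ) → ℂ :=
  fun z => ∑ i ∈ Finset.range (n k + 1), ℓ k i * F (Function.update z k (t k i))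

noncomputable def interpIter (m : ℕ) (n : Fin m → ℕ) (ℓ : Fin m → ℕ → ℂ)
    (t : Fin m → ℕ → ℂ) (F : (Fin m → ℂ) → ℂ) : ℕ → (Fin m → ℂ) → ℂ
  | 0 => F
  | (k+1) => if hk : k < m then interpStep m n ℓ t ⟨k, hk⟩ (interpIter m n ℓ t F k)
             else interpIter m n ℓ t F k

lemma interpIter_succ (m : ℕ) (n : Fin m → ℕ) (ℓ : Fin m → ℕ → ℂ)
    (t : Fin m → ℕ → ℂ) (F : (Fin m → ℂ) → ℂ) (k : ℕ) (hk : k < m) (z : Fin m → ℂ) :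
    interpIter m n ℓ t F (k+1) z
      = ∑ i ∈ Finset.range (n ⟨k, hk⟩ + 1),
          ℓ ⟨k, hk⟩ i * interpIter m n ℓ t F k (Function.update z ⟨k, hk⟩ (t ⟨k, hk⟩ i)) := by
  have h : interpIter m n ℓ t F (k+1)
      = dite (k < m) (fun hk' => interpStep m n ℓ t ⟨k, hk'⟩ (interpIter m n ℓ t F k))
          (fun _ => interpIter m n ℓ t F k) := rfl
  rw [h, dif_pos hk]
  rfl

lemma interpIter_succ_of_ge (m : ℕ) (n : Fin m → ℕ) (ℓ : Fin m → ℕ → ℂ)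
    (t : Fin m → ℕ → ℂ) (F : (Fin m → ℂ) → ℂ) (k : ℕ) (hk : ¬ k < m) :
    interpIter m n ℓ t F (k+1) = interpIter m n ℓ t F k := by
  have h : interpIter m n ℓ t F (k+1)
      = dite (k < m) (fun hk' => interpStep m n ℓ t ⟨k, hk'⟩ (interpIter m n ℓ t F k))
          (fun _ => interpIter m n ℓ t F k) := rfl
  rw [h, dif_neg hk]

lemma sum_piFinset_update {m : ℕ} (u : Fin m → Finset ℕ) (k : Fin m) (hk : u k = {0})
    (w : Finset ℕ) (G : (Fin m → ℕ) → ℂ) :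
    ∑ ν ∈ Fintype.piFinset (Function.update u k w), G ν
      = ∑ i ∈ w, ∑ ν ∈ Fintype.piFinset u, G (Function.update ν k i) := by
  rw [← Finset.sum_product']
  refine Finset.sum_nbij' (fun ν => (ν k, Function.update ν k 0))
    (fun p => Function.update p.2 k p.1) ?_ ?_ ?_ ?_ ?_
  · intro ν hν
    rw [Fintype.mem_piFinset] at hν
    rw [Finset.mem_product]
    dsimp only
    constructor
    · have := hν k; rwa [Function.update_self] at this
    · rw [Fintype.mem_piFinset]
      intro j
      rcases eq_or_ne j k with hjk | hjk
      · subst hjk; rw [Function.update_self, hk]; simp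
      · rw [Function.update_of_ne hjk]
        have := hν j; rwa [Function.update_of_ne hjk] at this
  · intro p hp
    rw [Finset.mem_product] at hp
    rw [Fintype.mem_piFinset]
    intro j
    rcases eq_or_ne j k with hjk | hjk
    · subst hjk; rw [Function.update_self, Function.update_self]; exact hp.1
    · rw [Function.update_of_ne hjk, Function.update_of_ne hjk]
      exact Fintype.mem_piFinset.1 hp.2 j
  · intro ν hν
    dsimp only
    rw [Function.update_idem, Function.update_eq_self]
  · intro p hp
    rw [Finset.mem_product] at hp
    have h2 : p.2 k = 0 := by
      have := Fintype.mem_piFinset.1 hp.2 k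
      rw [hk] at this; simpa using this
    refine Prod.ext ?_ ?_
    · simp
    · dsimp only
      rw [Function.update_idem, ← h2, Function.update_eq_self]
  · intro ν hν
    dsimp only
    rw [Function.update_idem, Function.update_eq_self]

lemma interpIter_eval {m : ℕ} (n : Fin m → ℕ) (ℓ : Fin m → ℕ → ℂ) (t : Fin m → ℕ → ℂ)
    (F : (Fin m → ℂ) → ℂ) (k : ℕ) (z : Fin m → ℂ) :
    interpIter m n ℓ t F k z
      = ∑ ν ∈ Fintype.piFinset
            (fun j : Fin m => if (j:ℕ) < k then Finset.range (n j + 1) else {0}),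
          (∏ j : Fin m, if (j:ℕ) < k then ℓ j (ν j) else 1)
            * F (fun j => if (j:ℕ) < k then t j (ν j) else z j) := by
  induction k generalizing z with
  | zero =>
    have h1 : (fun j : Fin m => if (j:ℕ) < 0 then Finset.range (n j + 1) else {0})
        = fun _ => ({0} : Finset ℕ) := by funext j; simp
    have h2 : Fintype.piFinset (fun _ : Fin m => ({0} : Finset ℕ)) = {fun _ => 0} := by
      ext ν; simp [Fintype.mem_piFinset, funext_iff]
    rw [show interpIter m n ℓ t F 0 z = F z from rfl, h1, h2, Finset.sum_singleton]
    simp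
  | succ k ih =>
    by_cases hk : k < m
    · set κ : Fin m := ⟨k, hk⟩ with hκ
      have hκv : (κ:ℕ) = k := rfl
      have hu : (fun j : Fin m => if (j:ℕ) < k+1 then Finset.range (n j + 1) else {0})
          = Function.update (fun j : Fin m => if (j:ℕ) < k then Finset.range (n j + 1) else {0})
              κ (Finset.range (n κ + 1)) := by
        funext j
        rcases eq_or_ne j κ with hjk | hjk
        · subst hjk; rw [Function.update_self, if_pos (by omega)]
        · rw [Function.update_of_ne hjk]
          have hjv : (j:ℕ) ≠ k := fun hc => hjk (Fin.ext (by omega))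
          by_cases hkj : (j:ℕ) < k
          · rw [if_pos (by omega), if_pos hkj]
          · rw [if_neg (by omega), if_neg hkj]
      rw [interpIter_succ m n ℓ t F k hk z, hu, sum_piFinset_update _ κ (by simp [hκv]) _ _]
      refine Finset.sum_congr rfl fun i hi => ?_
      rw [ih (Function.update z κ (t κ i)), Finset.mul_sum]
      refine Finset.sum_congr rfl fun ν hν => ?_
      have hprodeq : (∏ j : Fin m, if (j:ℕ) < k+1 then ℓ j (Function.update ν κ i j) else 1)
          = ℓ κ i * ∏ j : Fin m, (if (j:ℕ) < k then ℓ j (ν j) else 1) := by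
        rw [← Finset.mul_prod_erase Finset.univ
            (fun j : Fin m => if (j:ℕ) < k+1 then ℓ j (Function.update ν κ i j) else 1)
            (Finset.mem_univ κ),
          ← Finset.mul_prod_erase Finset.univ
            (fun j : Fin m => if (j:ℕ) < k then ℓ j (ν j) else 1)
            (Finset.mem_univ κ)]
        rw [Function.update_self, if_pos (by omega : (κ:ℕ) < k + 1),
          if_neg (by omega : ¬ (κ:ℕ) < k), one_mul]
        congr 1
        refine Finset.prod_congr rfl fun j hj => ?_
        have hjk : j ≠ κ := (Finset.mem_erase.1 hj).1
        have hjv : (j:ℕ) ≠ k := fun hc => hjk (Fin.ext (by omega))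
        rw [Function.update_of_ne hjk]
        by_cases hkj : (j:ℕ) < k
        · rw [if_pos (by omega), if_pos hkj]
        · rw [if_neg (by omega), if_neg hkj]
      have hargeq : (fun j : Fin m =>
            if (j:ℕ) < k then t j (ν j) else Function.update z κ (t κ i) j)
          = fun j : Fin m => if (j:ℕ) < k+1 then t j (Function.update ν κ i j) else z j := by
        funext j
        rcases eq_or_ne j κ with hjk | hjk
        · subst hjk
          rw [if_neg (by omega : ¬ (κ:ℕ) < k), if_pos (by omega : (κ:ℕ) < k + 1),
            Function.update_self, Function.update_self]
        · have hjv : (j:ℕ) ≠ k := fun hc => hjk (Fin.ext (by omega))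
          rw [Function.update_of_ne hjk, Function.update_of_ne hjk]
          by_cases hkj : (j:ℕ) < k
          · rw [if_pos hkj, if_pos (by omega)]
          · rw [if_neg hkj, if_neg (by omega)]
      rw [hprodeq, hargeq, mul_assoc]
    · rw [interpIter_succ_of_ge m n ℓ t F k hk, ih z]
      apply Finset.sum_congr
      · apply congrArg
        funext j
        have hj := j.isLt
        rw [if_pos (show (j:ℕ) < k by omega), if_pos (show (j:ℕ) < k + 1 by omega)]
      · intro ν _
        congr 1
        · refine Finset.prod_congr rfl fun j _ => ?_
          have hj := j.isLt
          rw [if_pos (show (j:ℕ) < k by omega), if_pos (show (j:ℕ) < k + 1 by omega)]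
        · congr 1
          funext j
          have hj := j.isLt
          rw [if_pos (show (j:ℕ) < k by omega), if_pos (show (j:ℕ) < k + 1 by omega)]

lemma multi_bound {m : ℕ} (r ρ so : Fin m → ℝ)
    (h1ρ : ∀ j, 1 ≤ ρ j) (hρs : ∀ j, ρ j + 2 ≤ so j) (hsor : ∀ j, so j < r j + 2)
    (f : (Fin m → ℂ) → ℂ)
    (hf : DifferentiableOn ℂ f {w : Fin m → ℂ | ∀ j, ‖w j‖ < r j + 2})
    (C : ℝ) (hC : ∀ w : Fin m → ℂ, (∀ j, ‖w j‖ ≤ so j) → ‖f w‖ ≤ C)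
    (n : Fin m → ℕ) (t : Fin m → ℕ → ℝ)
    (ht : ∀ j, ∀ i ∈ Finset.range (n j + 1), |t j i| ≤ 1)
    (htinj : ∀ j, Set.InjOn (fun i => ((t j i : ℝ) : ℂ)) (Finset.range (n j + 1)))
    (a : Fin m → ℝ) (ha : ∀ j, |a j| ≤ ρ j)
    (ℓ : Fin m → ℕ → ℂ)
    (hℓ : ∀ j i, ℓ j i = ∏ μ ∈ (Finset.range (n j + 1)).erase i,
        (((a j - t j μ) / (t j i - t j μ) : ℝ) : ℂ))
    (k : ℕ) :
    (∀ z : Fin m → ℂ, (∀ j, ‖z j‖ ≤ so j) →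
        ‖interpIter m n ℓ (fun j i => ((t j i : ℝ) : ℂ)) f k z‖
          ≤ C * ∏ j : Fin m, (if (j:ℕ) < k then 1 + so j / (so j - ρ j) else 1))
    ∧ ‖f (fun j => ((a j : ℝ) : ℂ))
          - interpIter m n ℓ (fun j i => ((t j i : ℝ) : ℂ)) f k (fun j => ((a j : ℝ) : ℂ))‖
        ≤ ∑ j ∈ Finset.univ.filter (fun j : Fin m => (j:ℕ) < k),
            (C * ∏ i : Fin m, (1 + so i / (so i - ρ i))) * (so j / (so j - ρ j))
              * ((ρ j + 1) / (so j - 1)) ^ (n j + 1) := by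
  set tC : Fin m → ℕ → ℂ := fun j i => ((t j i : ℝ) : ℂ) with htC
  set aC : Fin m → ℂ := fun j => ((a j : ℝ) : ℂ) with haC
  have hso0 : ∀ j, 0 < so j := fun j => by have := h1ρ j; have := hρs j; linarith
  have hsoρ : ∀ j, 0 < so j - ρ j := fun j => by have := h1ρ j; have := hρs j; linarith
  have hso1 : ∀ j, 0 < so j - 1 := fun j => by have := h1ρ j; have := hρs j; linarith
  have hB0 : ∀ j, 0 ≤ so j / (so j - ρ j) := fun j => div_nonneg (hso0 j).le (hsoρ j).le
  have hq0 : ∀ j, 0 ≤ (ρ j + 1) / (so j - 1) := fun j =>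
    div_nonneg (by linarith [h1ρ j]) (hso1 j).le
  have hq1 : ∀ j, (ρ j + 1) / (so j - 1) ≤ 1 := fun j => by
    rw [div_le_one (hso1 j)]; have := hρs j; linarith
  have hC0 : 0 ≤ C := by
    refine le_trans (norm_nonneg (f fun _ => 0)) (hC _ fun j => ?_)
    simp [(hso0 j).le]
  have haso : ∀ j, |a j| ≤ so j := fun j => le_trans (ha j) (by have := hρs j; linarith)
  have hanorm : ∀ j, ‖aC j‖ ≤ so j := fun j => by
    rw [haC]; rw [Complex.norm_real, Real.norm_eq_abs]; exact haso j
  have h1r : ∀ j, (1:ℝ) < r j + 2 := fun j => by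
    have := hρs j; have := hsor j; have := h1ρ j; linarith
  -- validity of updates
  have hupdval : ∀ (z : Fin m → ℂ) (κ : Fin m) (w : ℂ), (∀ j, ‖z j‖ ≤ so j) → ‖w‖ ≤ so κ →
      ∀ j, ‖Function.update z κ w j‖ ≤ so j := by
    intro z κ w hz hw j
    rcases eq_or_ne j κ with hjk | hjk
    · subst hjk; rwa [Function.update_self]
    · rw [Function.update_of_ne hjk]; exact hz j
  induction k with
  | zero =>
    constructor
    · intro z hz
      have : (∏ j : Fin m, if (j:ℕ) < 0 then 1 + so j / (so j - ρ j) else 1) = 1 := by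
        simp
      rw [this, mul_one]
      exact hC z hz
    · have : Finset.univ.filter (fun j : Fin m => (j:ℕ) < 0) = ∅ := by
        ext j; simp
      rw [this, Finset.sum_empty]
      simp [show interpIter m n ℓ tC f 0 = f from rfl]
  | succ k ih =>
    by_cases hk : k < m
    · set κ : Fin m := ⟨k, hk⟩ with hκ
      have hκv : (κ:ℕ) = k := rfl
      set Mk : ℝ := C * ∏ j : Fin m, (if (j:ℕ) < k then 1 + so j / (so j - ρ j) else 1)
        with hMk
      set Mfull : ℝ := C * ∏ i : Fin m, (1 + so i / (so i - ρ i)) with hMfull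
      have hMk0 : 0 ≤ Mk := by
        refine mul_nonneg hC0 (Finset.prod_nonneg fun j _ => ?_)
        by_cases hj : (j:ℕ) < k
        · rw [if_pos hj]; have := hB0 j; linarith
        · rw [if_neg hj]; linarith
      have hMkfull : Mk ≤ Mfull := by
        refine mul_le_mul_of_nonneg_left (Finset.prod_le_prod (fun j _ => ?_) fun j _ => ?_) hC0
        · by_cases hj : (j:ℕ) < k
          · rw [if_pos hj]; have := hB0 j; linarith
          · rw [if_neg hj]; linarith
        · by_cases hj : (j:ℕ) < k
          · rw [if_pos hj]
          · rw [if_neg hj]; have := hB0 j; linarith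
      -- the key 1D interpolation estimate
      have key : ∀ z : Fin m → ℂ, (∀ j, ‖z j‖ ≤ so j) →
          ‖interpIter m n ℓ tC f k (Function.update z κ ((a κ : ℝ) : ℂ))
            - ∑ i ∈ Finset.range (n κ + 1),
                ℓ κ i * interpIter m n ℓ tC f k (Function.update z κ (tC κ i))‖
          ≤ Mk * (so κ / (so κ - ρ κ)) * ((ρ κ + 1) / (so κ - 1)) ^ (n κ + 1) := by
        intro z hz
        set g : ℂ → ℂ := fun w => interpIter m n ℓ tC f k (Function.update z κ w) with hg
        have hgdiff : DifferentiableOn ℂ g (closedBall (0:ℂ) (so κ)) := by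
          have hexp : g = fun w => ∑ ν ∈ Fintype.piFinset
              (fun j : Fin m => if (j:ℕ) < k then Finset.range (n j + 1) else {0}),
              ((∏ j : Fin m, if (j:ℕ) < k then ℓ j (ν j) else 1)
                * f (Function.update
                    (fun j : Fin m => if (j:ℕ) < k then tC j (ν j) else z j) κ w)) := by
            funext w
            show interpIter m n ℓ tC f k (Function.update z κ w) = _
            rw [interpIter_eval]
            refine Finset.sum_congr rfl fun ν _ => ?_
            have harg : (fun j : Fin m =>
                  if (j:ℕ) < k then tC j (ν j) else Function.update z κ w j)
                = Function.update
                    (fun j : Fin m => if (j:ℕ) < k then tC j (ν j) else z j) κ w := by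
              funext j
              rcases eq_or_ne j κ with hjk | hjk
              · subst hjk
                rw [if_neg (by omega : ¬ (κ:ℕ) < k), Function.update_self,
                  Function.update_self]
              · rw [Function.update_of_ne hjk, Function.update_of_ne hjk]
            rw [harg]
          rw [hexp]
          refine DifferentiableOn.fun_sum fun ν hν => ?_
          have hupd : Differentiable ℂ (fun w : ℂ => Function.update
              (fun j : Fin m => if (j:ℕ) < k then tC j (ν j) else z j) κ w) := by
            refine differentiable_pi.2 fun j => ?_
            have : (fun w : ℂ => Function.update
                (fun j : Fin m => if (j:ℕ) < k then tC j (ν j) else z j) κ w j)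
                = fun w => if j = κ then w
                    else (if (j:ℕ) < k then tC j (ν j) else z j) := by
              funext w; rw [Function.update_apply]
            rw [this]
            by_cases hjk : j = κ
            · simp only [if_pos hjk]; exact differentiable_id
            · simp only [if_neg hjk]; exact differentiable_const _
          have hmaps : Set.MapsTo (fun w : ℂ => Function.update
              (fun j : Fin m => if (j:ℕ) < k then tC j (ν j) else z j) κ w)
              (closedBall (0:ℂ) (so κ))
              {w : Fin m → ℂ | ∀ j, ‖w j‖ < r j + 2} := by
            intro w hw
            rw [mem_closedBall_zero_iff] at hw
            intro j
            dsimp only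
            rcases eq_or_ne j κ with hjk | hjk
            · subst hjk
              rw [Function.update_self]
              exact lt_of_le_of_lt hw (hsor κ)
            · rw [Function.update_of_ne hjk]
              by_cases hkj : (j:ℕ) < k
              · rw [if_pos hkj, htC]
                have hν' := Fintype.mem_piFinset.1 hν j
                rw [if_pos hkj] at hν'
                have : ‖((t j (ν j) : ℝ) : ℂ)‖ ≤ 1 := by
                  rw [Complex.norm_real, Real.norm_eq_abs]; exact ht j _ hν'
                exact lt_of_le_of_lt this (h1r j)
              · rw [if_neg hkj]
                exact lt_of_le_of_lt (hz j) (hsor j)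
          exact DifferentiableOn.const_mul
            (hf.comp hupd.differentiableOn hmaps) _
        have hgcl : DiffContOnCl ℂ g (ball (0:ℂ) (so κ)) := by
          refine DifferentiableOn.diffContOnCl ?_
          rwa [closure_ball (0:ℂ) (ne_of_gt (hso0 κ))]
        have hCg : ∀ w ∈ sphere (0:ℂ) (so κ), ‖g w‖ ≤ Mk := by
          intro w hw
          rw [mem_sphere_zero_iff_norm] at hw
          exact (ih).1 _ (hupdval z κ w hz (le_of_eq hw))
        have hone := onedim (h1ρ κ) (hρs κ) (Finset.range (n κ + 1)) (t κ) (ht κ)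
          (htinj κ) hgcl hCg (ha κ)
        rw [Finset.card_range] at hone
        have hconv : ∀ ν : ℕ, (∏ μ ∈ (Finset.range (n κ + 1)).erase ν,
            (((a κ - t κ μ) / (t κ ν - t κ μ) : ℝ) : ℂ)) = ℓ κ ν := fun ν => (hℓ κ ν).symm
        calc ‖interpIter m n ℓ tC f k (Function.update z κ ((a κ : ℝ) : ℂ))
              - ∑ i ∈ Finset.range (n κ + 1),
                  ℓ κ i * interpIter m n ℓ tC f k (Function.update z κ (tC κ i))‖
            = ‖g ((a κ : ℝ) : ℂ) - ∑ i ∈ Finset.range (n κ + 1),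
                (∏ μ ∈ (Finset.range (n κ + 1)).erase i,
                  (((a κ - t κ μ) / (t κ i - t κ μ) : ℝ) : ℂ)) * g ((t κ i : ℝ) : ℂ)‖ := by
              congr 1
              congr 1
              exact Finset.sum_congr rfl fun i _ => by rw [hconv i]
          _ ≤ Mk * (so κ / (so κ - ρ κ)) * ((ρ κ + 1) / (so κ - 1)) ^ (n κ + 1) := hone
      -- part (i)
      have hMk1 : Mk * (1 + so κ / (so κ - ρ κ))
          = C * ∏ j : Fin m, (if (j:ℕ) < k+1 then 1 + so j / (so j - ρ j) else 1) := by
        rw [hMk]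
        rw [← Finset.mul_prod_erase Finset.univ
            (fun j : Fin m => if (j:ℕ) < k+1 then 1 + so j / (so j - ρ j) else 1)
            (Finset.mem_univ κ),
          ← Finset.mul_prod_erase Finset.univ
            (fun j : Fin m => if (j:ℕ) < k then 1 + so j / (so j - ρ j) else 1)
            (Finset.mem_univ κ)]
        rw [if_pos (by omega : (κ:ℕ) < k + 1), if_neg (by omega : ¬ (κ:ℕ) < k), one_mul]
        have herase : ∀ j ∈ Finset.univ.erase κ,
            (if (j:ℕ) < k then 1 + so j / (so j - ρ j) else 1)
            = (if (j:ℕ) < k+1 then 1 + so j / (so j - ρ j) else 1) := by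
          intro j hj
          have hjk : j ≠ κ := (Finset.mem_erase.1 hj).1
          have hjv : (j:ℕ) ≠ k := fun hc => hjk (Fin.ext (by omega))
          by_cases hkj : (j:ℕ) < k
          · rw [if_pos hkj, if_pos (by omega)]
          · rw [if_neg hkj, if_neg (by omega)]
        rw [Finset.prod_congr rfl herase]
        ring
      constructor
      · intro z hz
        rw [interpIter_succ m n ℓ tC f k hk z]
        have hval : ‖interpIter m n ℓ tC f k (Function.update z κ ((a κ : ℝ) : ℂ))‖ ≤ Mk := by
          refine (ih).1 _ (hupdval z κ _ hz ?_)
          rw [Complex.norm_real, Real.norm_eq_abs]; exact haso κ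
        have hkey := key z hz
        have htri : ‖∑ i ∈ Finset.range (n κ + 1),
            ℓ κ i * interpIter m n ℓ tC f k (Function.update z κ (tC κ i))‖
            ≤ Mk + Mk * (so κ / (so κ - ρ κ)) * ((ρ κ + 1) / (so κ - 1)) ^ (n κ + 1) := by
          have heq : (∑ i ∈ Finset.range (n κ + 1),
              ℓ κ i * interpIter m n ℓ tC f k (Function.update z κ (tC κ i)))
              = interpIter m n ℓ tC f k (Function.update z κ ((a κ : ℝ) : ℂ))
                - (interpIter m n ℓ tC f k (Function.update z κ ((a κ : ℝ) : ℂ))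
                  - ∑ i ∈ Finset.range (n κ + 1),
                      ℓ κ i * interpIter m n ℓ tC f k (Function.update z κ (tC κ i))) := by
            ring
          rw [heq]
          exact le_trans (norm_sub_le _ _) (add_le_add hval hkey)
        refine le_trans htri ?_
        rw [← hMk1]
        have hpow : ((ρ κ + 1) / (so κ - 1)) ^ (n κ + 1) ≤ 1 :=
          pow_le_one₀ (hq0 κ) (hq1 κ)
        have hle2 : Mk * (so κ / (so κ - ρ κ)) * ((ρ κ + 1) / (so κ - 1)) ^ (n κ + 1)
            ≤ Mk * (so κ / (so κ - ρ κ)) := by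
          have h := mul_le_mul_of_nonneg_left hpow (mul_nonneg hMk0 (hB0 κ))
          simpa using h
        rw [mul_add, mul_one]
        linarith [hle2]
      · -- part (ii)
        have hvalid : ∀ j, ‖aC j‖ ≤ so j := hanorm
        have hupdaC : Function.update aC κ ((a κ : ℝ) : ℂ) = aC :=
          Function.update_eq_self κ aC
        have hkey := key aC hvalid
        rw [hupdaC] at hkey
        have hfilter : Finset.univ.filter (fun j : Fin m => (j:ℕ) < k+1)
            = insert κ (Finset.univ.filter (fun j : Fin m => (j:ℕ) < k)) := by
          ext j
          simp only [Finset.mem_filter, Finset.mem_insert, Finset.mem_univ, true_and,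
            Fin.ext_iff, hκv]
          omega
        have hκnotin : κ ∉ Finset.univ.filter (fun j : Fin m => (j:ℕ) < k) := by
          simp [hκv]
        rw [hfilter, Finset.sum_insert hκnotin]
        rw [interpIter_succ m n ℓ tC f k hk aC]
        calc ‖f aC - ∑ i ∈ Finset.range (n κ + 1),
              ℓ κ i * interpIter m n ℓ tC f k (Function.update aC κ (tC κ i))‖
            = ‖(f aC - interpIter m n ℓ tC f k aC)
                + (interpIter m n ℓ tC f k aC - ∑ i ∈ Finset.range (n κ + 1),
                    ℓ κ i * interpIter m n ℓ tC f k (Function.update aC κ (tC κ i)))‖ := by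
              rw [sub_add_sub_cancel]
          _ ≤ ‖f aC - interpIter m n ℓ tC f k aC‖
                + ‖interpIter m n ℓ tC f k aC - ∑ i ∈ Finset.range (n κ + 1),
                    ℓ κ i * interpIter m n ℓ tC f k (Function.update aC κ (tC κ i))‖ :=
            norm_add_le _ _
          _ ≤ (∑ j ∈ Finset.univ.filter (fun j : Fin m => (j:ℕ) < k),
                Mfull * (so j / (so j - ρ j)) * ((ρ j + 1) / (so j - 1)) ^ (n j + 1))
                + Mk * (so κ / (so κ - ρ κ)) * ((ρ κ + 1) / (so κ - 1)) ^ (n κ + 1) :=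
            add_le_add (ih).2 hkey
          _ ≤ Mfull * (so κ / (so κ - ρ κ)) * ((ρ κ + 1) / (so κ - 1)) ^ (n κ + 1)
              + ∑ j ∈ Finset.univ.filter (fun j : Fin m => (j:ℕ) < k),
                Mfull * (so j / (so j - ρ j)) * ((ρ j + 1) / (so j - 1)) ^ (n j + 1) := by
            have hple :
                Mk * (so κ / (so κ - ρ κ)) * ((ρ κ + 1) / (so κ - 1)) ^ (n κ + 1)
                ≤ Mfull * (so κ / (so κ - ρ κ)) * ((ρ κ + 1) / (so κ - 1)) ^ (n κ + 1) :=
              mul_le_mul_of_nonneg_right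
                (mul_le_mul_of_nonneg_right hMkfull (hB0 κ))
                (pow_nonneg (hq0 κ) _)
            linarith [hple]
    · -- k ≥ m : nothing changes
      have hcond : ∀ j : Fin m, (j:ℕ) < k ∧ (j:ℕ) < k + 1 := by
        intro j; have := j.isLt; omega
      constructor
      · intro z hz
        rw [interpIter_succ_of_ge m n ℓ tC f k hk]
        refine le_trans ((ih).1 z hz) (le_of_eq ?_)
        congr 1
        refine Finset.prod_congr rfl fun j _ => ?_
        rw [if_pos (hcond j).1, if_pos (hcond j).2]
      · rw [interpIter_succ_of_ge m n ℓ tC f k hk]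
        refine le_trans (ih).2 (le_of_eq ?_)
        apply Finset.sum_congr
        · ext j; simp only [Finset.mem_filter, Finset.mem_univ, true_and]
          exact ⟨fun _ => (hcond j).2, fun _ => (hcond j).1⟩
        · intros; rfl


end Statement5Aux

open Statement5Aux

/-- Multivariate parametric Lagrange interpolation theorem (Theorem 2.2): under
holomorphy of the `f_x` on the enlarged polydisc `D^m_{r+2}` and local uniform
boundedness of the family `{f_x : x ∈ K}`, the Lagrange interpolation sums of `φ` at
the nodes `h_j(N_j, ·) ⊂ [-1,1]` converge to `φ` uniformly on every compact subset of
`(∏_j (-r_j, r_j)) × R` as `min_j N_j → ∞`. -/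
theorem statement_5 {R : Type*} [MetricSpace R] (m : ℕ) (hm : 1 ≤ m)
    (r : Fin m → ℝ) (hr : ∀ j, 1 < r j)
    (h : Fin m → ℕ → ℕ → ℝ)
    (hmem : ∀ j (N : ℕ), 1 ≤ N → ∀ ν ≤ N, h j N ν ∈ Set.Icc (-1 : ℝ) 1)
    (hmono : ∀ j (N : ℕ), 1 ≤ N → ∀ ν ν' : ℕ, ν < ν' → ν' ≤ N → h j N ν < h j N ν')
    (φ : (Fin m → ℝ) × R → ℂ)
    (hφ : ContinuousOn φ {p : (Fin m → ℝ) × R | ∀ j, |p.1 j| < r j})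
    (f : R → (Fin m → ℂ) → ℂ)
    (hf_holo : ∀ x, DifferentiableOn ℂ (f x)
      {w : Fin m → ℂ | ∀ j, ‖w j‖ < r j + 2})
    (hmatch : ∀ a : Fin m → ℝ, (∀ j, |a j| < r j) → ∀ x : R,
      φ (a, x) = f x fun j => (a j : ℂ))
    (hbdd : ∀ K : Set R, IsCompact K → ∀ K' : Set (Fin m → ℂ), IsCompact K' →
      K' ⊆ {w : Fin m → ℂ | ∀ j, ‖w j‖ < r j + 2} →
      ∃ C : ℝ, ∀ x ∈ K, ∀ w ∈ K', ‖f x w‖ ≤ C) :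
    ∀ K : Set ((Fin m → ℝ) × R), IsCompact K → K ⊆ {p | ∀ j, |p.1 j| < r j} →
      ∀ ε > 0, ∃ M : ℕ, ∀ N : Fin m → ℕ, (∀ j, 1 ≤ N j) → (∀ j, M ≤ N j) →
        ∀ p ∈ K,
          ‖(∑ ν ∈ Fintype.piFinset fun j => Finset.range (N j + 1),
              (∏ j, ∏ ν' ∈ (Finset.range (N j + 1)).erase (ν j),
                (((p.1 j - h j (N j) ν') / (h j (N j) (ν j) - h j (N j) ν') : ℝ) : ℂ)) *
              φ (fun j => h j (N j) (ν j), p.2)) - φ p‖ < ε := by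
  intro K hK hKsub ε hε
  rcases K.eq_empty_or_nonempty with hKe | hKne
  · exact ⟨0, fun N _ _ p hp => absurd hp (by rw [hKe]; exact Set.notMem_empty p)⟩
  have hKR : IsCompact (Prod.snd '' K) := hK.image continuous_snd
  have hcoord : ∀ j : Fin m, ∃ c : ℝ, 1 ≤ c ∧ c < r j ∧ ∀ p ∈ K, |p.1 j| ≤ c := by
    intro j
    obtain ⟨p0, hp0K, hp0⟩ := hK.exists_isMaxOn hKne
      ((continuous_abs.comp ((continuous_apply j).comp continuous_fst)).continuousOn)
    exact ⟨max 1 |p0.1 j|, le_max_left _ _, max_lt (hr j) (hKsub hp0K j),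
      fun p hp => le_trans (hp0 hp) (le_max_right _ _)⟩
  choose ρ hρ1 hρr hρbd using hcoord
  set so : Fin m → ℝ := fun j => (ρ j + r j) / 2 + 2 with hsodef
  have hρs : ∀ j, ρ j + 2 ≤ so j := fun j => by
    have := hρr j; simp only [hsodef]; linarith
  have hρslt : ∀ j, ρ j + 2 < so j := fun j => by
    have := hρr j; simp only [hsodef]; linarith
  have hsor : ∀ j, so j < r j + 2 := fun j => by
    have := hρr j; simp only [hsodef]; linarith
  have hso1 : ∀ j, 0 < so j - 1 := fun j => by have := hρs j; have := hρ1 j; linarith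
  have hsoρ : ∀ j, 0 < so j - ρ j := fun j => by have := hρs j; linarith
  have hso0 : ∀ j, 0 < so j := fun j => by have := hρs j; have := hρ1 j; linarith
  have hpolyc : IsCompact {w : Fin m → ℂ | ∀ j, ‖w j‖ ≤ so j} := by
    have hsetr : {w : Fin m → ℂ | ∀ j, ‖w j‖ ≤ so j}
        = Set.pi Set.univ (fun j => closedBall (0:ℂ) (so j)) := by
      ext w
      simp [Set.mem_pi, mem_closedBall_zero_iff]
    rw [hsetr]
    exact isCompact_univ_pi fun j => isCompact_closedBall _ _
  have hpolysub : {w : Fin m → ℂ | ∀ j, ‖w j‖ ≤ so j}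
      ⊆ {w : Fin m → ℂ | ∀ j, ‖w j‖ < r j + 2} := by
    intro w hw j
    exact lt_of_le_of_lt (hw j) (hsor j)
  obtain ⟨C, hC⟩ := hbdd (Prod.snd '' K) hKR _ hpolyc hpolysub
  set C' : ℝ := max C 0 with hC'def
  have hC'0 : 0 ≤ C' := le_max_right _ _
  set B : Fin m → ℝ := fun j => so j / (so j - ρ j) with hBdef
  set Mfull : ℝ := C' * ∏ i : Fin m, (1 + B i) with hMf
  set q : Fin m → ℝ := fun j => (ρ j + 1) / (so j - 1) with hqdef
  have hq0 : ∀ j, 0 ≤ q j := fun j =>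
    div_nonneg (by linarith [hρ1 j]) (hso1 j).le
  have hq1 : ∀ j, q j < 1 := fun j => by
    rw [hqdef, div_lt_one (hso1 j)]
    have := hρslt j; linarith
  have hB0 : ∀ j, 0 ≤ B j := fun j => div_nonneg (hso0 j).le (hsoρ j).le
  have hnem : Nonempty (Fin m) := ⟨⟨0, hm⟩⟩
  set Q : ℝ := Finset.univ.sup' Finset.univ_nonempty q with hQdef
  have hQlt : Q < 1 := by
    rw [hQdef, Finset.sup'_lt_iff]
    exact fun j _ => hq1 j
  have hqQ : ∀ j, q j ≤ Q := fun j => Finset.le_sup' q (Finset.mem_univ j)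
  have hQ0 : 0 ≤ Q := le_trans (hq0 (Classical.arbitrary (Fin m))) (hqQ _)
  set A : ℝ := ∑ j : Fin m, Mfull * B j with hAdef
  have hMfull0 : 0 ≤ Mfull := by
    refine mul_nonneg hC'0 (Finset.prod_nonneg fun i _ => ?_)
    have := hB0 i; linarith
  have hA0 : 0 ≤ A :=
    Finset.sum_nonneg fun j _ => mul_nonneg hMfull0 (hB0 j)
  have htend : Filter.Tendsto (fun M : ℕ => Q ^ M) Filter.atTop (nhds 0) :=
    tendsto_pow_atTop_nhds_zero_of_lt_one hQ0 hQlt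
  have hεA : 0 < ε / (A + 1) := div_pos hε (by linarith)
  obtain ⟨M, hM⟩ := (htend.eventually_lt_const hεA).exists
  refine ⟨M, fun N hN1 hNM p hp => ?_⟩
  have hC'bd : ∀ w : Fin m → ℂ, (∀ j, ‖w j‖ ≤ so j) → ‖f p.2 w‖ ≤ C' :=
    fun w hw => le_trans (hC p.2 ⟨p, hp, rfl⟩ w hw) (le_max_left _ _)
  have hnodes : ∀ j : Fin m, ∀ i ∈ Finset.range (N j + 1), |h j (N j) i| ≤ 1 := by
    intro j i hi
    have := hmem j (N j) (hN1 j) i (Nat.lt_succ_iff.1 (Finset.mem_range.1 hi))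
    rw [abs_le]
    exact ⟨this.1, this.2⟩
  have hinjn : ∀ j : Fin m, Set.InjOn (fun i => ((h j (N j) i : ℝ) : ℂ))
      (Finset.range (N j + 1)) := by
    intro j i hi i' hi' hEq
    have hEq' : h j (N j) i = h j (N j) i' := Complex.ofReal_inj.1 hEq
    by_contra hnei
    have hi2 : i ≤ N j := Nat.lt_succ_iff.1 (Finset.mem_range.1 hi)
    have hi2' : i' ≤ N j := Nat.lt_succ_iff.1 (Finset.mem_range.1 hi')
    rcases lt_or_gt_of_ne hnei with hlt | hlt
    · exact absurd hEq' (ne_of_lt (hmono j (N j) (hN1 j) i i' hlt hi2'))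
    · exact absurd hEq'.symm (ne_of_lt (hmono j (N j) (hN1 j) i' i hlt hi2))
  have hmb := (multi_bound r ρ so hρ1 hρs hsor (f p.2) (hf_holo p.2) C' hC'bd
    (fun j => N j) (fun j i => h j (N j) i) hnodes hinjn p.1 (fun j => hρbd j p hp)
    (fun j i => ∏ μ ∈ (Finset.range (N j + 1)).erase i,
      (((p.1 j - h j (N j) μ) / (h j (N j) i - h j (N j) μ) : ℝ) : ℂ))
    (fun j i => rfl) m).2
  have hφp : φ p = f p.2 fun j => ((p.1 j : ℝ) : ℂ) := by
    have := hmatch p.1 (hKsub hp) p.2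
    rwa [Prod.mk.eta] at this
  have hsum_eq : (∑ ν ∈ Fintype.piFinset fun j => Finset.range (N j + 1),
        (∏ j, ∏ ν' ∈ (Finset.range (N j + 1)).erase (ν j),
          (((p.1 j - h j (N j) ν') / (h j (N j) (ν j) - h j (N j) ν') : ℝ) : ℂ)) *
        φ (fun j => h j (N j) (ν j), p.2))
      = interpIter m (fun j => N j)
          (fun j i => ∏ μ ∈ (Finset.range (N j + 1)).erase i,
            (((p.1 j - h j (N j) μ) / (h j (N j) i - h j (N j) μ) : ℝ) : ℂ))
          (fun j i => ((h j (N j) i : ℝ) : ℂ)) (f p.2) m (fun j => ((p.1 j : ℝ) : ℂ)) := by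
    rw [interpIter_eval]
    have hif : (fun j : Fin m => if (j:ℕ) < m then Finset.range (N j + 1) else {0})
        = fun j : Fin m => Finset.range (N j + 1) := funext fun j => if_pos j.isLt
    rw [hif]
    refine Finset.sum_congr rfl fun ν hν => ?_
    have h1 : (∏ j : Fin m, if (j:ℕ) < m then
          (∏ μ ∈ (Finset.range (N j + 1)).erase (ν j),
            (((p.1 j - h j (N j) μ) / (h j (N j) (ν j) - h j (N j) μ) : ℝ) : ℂ)) else 1)
        = ∏ j : Fin m, ∏ μ ∈ (Finset.range (N j + 1)).erase (ν j),
            (((p.1 j - h j (N j) μ) / (h j (N j) (ν j) - h j (N j) μ) : ℝ) : ℂ) :=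
      Finset.prod_congr rfl fun j _ => if_pos j.isLt
    have h2 : (fun j : Fin m => if (j:ℕ) < m then ((h j (N j) (ν j) : ℝ) : ℂ)
          else ((p.1 j : ℝ) : ℂ))
        = fun j : Fin m => ((h j (N j) (ν j) : ℝ) : ℂ) := funext fun j => if_pos j.isLt
    rw [h1, h2]
    have hlt : ∀ j : Fin m, |h j (N j) (ν j)| < r j := by
      intro j
      have hjm := Fintype.mem_piFinset.1 hν j
      exact lt_of_le_of_lt (hnodes j (ν j) hjm) (hr j)
    rw [hmatch (fun j => h j (N j) (ν j)) hlt p.2]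
  rw [hsum_eq, hφp, norm_sub_rev]
  have hfU : Finset.univ.filter (fun j : Fin m => (j:ℕ) < m) = Finset.univ := by
    ext j; simp [j.isLt]
  rw [hfU] at hmb
  calc ‖f p.2 (fun j => ((p.1 j : ℝ) : ℂ))
        - interpIter m (fun j => N j)
            (fun j i => ∏ μ ∈ (Finset.range (N j + 1)).erase i,
              (((p.1 j - h j (N j) μ) / (h j (N j) i - h j (N j) μ) : ℝ) : ℂ))
            (fun j i => ((h j (N j) i : ℝ) : ℂ)) (f p.2) m (fun j => ((p.1 j : ℝ) : ℂ))‖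
      ≤ ∑ j : Fin m, (C' * ∏ i : Fin m, (1 + so i / (so i - ρ i)))
          * (so j / (so j - ρ j)) * ((ρ j + 1) / (so j - 1)) ^ (N j + 1) := hmb
    _ ≤ A * Q ^ (M + 1) := by
      rw [hAdef, Finset.sum_mul]
      refine Finset.sum_le_sum fun j _ => ?_
      have hq' : q j ^ (N j + 1) ≤ Q ^ (M + 1) := by
        calc q j ^ (N j + 1) ≤ q j ^ (M + 1) :=
              pow_le_pow_of_le_one (hq0 j) (hq1 j).le (by have := hNM j; omega)
          _ ≤ Q ^ (M + 1) := pow_le_pow_left₀ (hq0 j) (hqQ j) _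
      exact mul_le_mul_of_nonneg_left hq' (mul_nonneg hMfull0 (hB0 j))
    _ < ε := by
      have h1 : Q ^ (M + 1) ≤ Q ^ M := pow_le_pow_of_le_one hQ0 hQlt.le (by omega)
      have h2 : (0:ℝ) ≤ Q ^ M := pow_nonneg hQ0 _
      have h3 : A * Q ^ (M + 1) ≤ (A + 1) * Q ^ M := by nlinarith
      have h4 : (A + 1) * Q ^ M < (A + 1) * (ε / (A + 1)) :=
        mul_lt_mul_of_pos_left hM (by linarith)
      have h5 : (A + 1) * (ε / (A + 1)) = ε := by field_simp
      linarith
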